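/- Let K be a differential field of characteristic 0 with derivation D, let k ⊆ K be a subfield with K/k a finite Galois extension with group G = Gal(K/k), and suppose every σ ∈ G commutes with D. Let s be a positive integer, let u ∈ K, let f : G → Kˣ satisfy σ(u) − u = logD f(σ) for all σ ∈ G, let d : G → Kˣ take values in the constants of K (D(d(σ)) = 0 for all σ), and let F ∈ Kˣ satisfy f(σ)^s·d(σ)⁻¹ = σ(F)/F for all σ ∈ G. Then the element u − (1/s)·logD F is fixed by every σ ∈ G and hence lies in k. -/

import Mathlib

/-- Let `K` be a differential field of characteristic 0 with derivation
`D`, `k ⊆ K` a subfield with `K/k` finite Galois with group `G`, each `σ ∈ G`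
commuting with `D`.  Let `s ≥ 1`, `u ∈ K`, `f : G → Kˣ` with `σ(u) − u = logD f(σ)`,
`d : G → Kˣ` constant-valued, and `F ∈ Kˣ` with `f(σ)^s·d(σ)⁻¹ = σ(F)/F` for all `σ`.
Then `u − (1/s)·logD F` is fixed by every `σ ∈ G`, hence lies in `k`. -/
theorem stmt6 (k K : Type*) [Field k] [Field K] [Algebra k K] [CharZero K]
    [FiniteDimensional k K] [IsGalois k K]
    (D : K → K)
    (hDadd : ∀ x y : K, D (x + y) = D x + D y)
    (hDmul : ∀ x y : K, D (x * y) = x * D y + D x * y)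
    (hcomm : ∀ (σ : K ≃ₐ[k] K) (x : K), σ (D x) = D (σ x))
    (s : ℕ) (hs : 0 < s) (u : K)
    (f : (K ≃ₐ[k] K) → Kˣ)
    (hf : ∀ σ : K ≃ₐ[k] K, σ u - u = D (f σ : K) / (f σ : K))
    (d : (K ≃ₐ[k] K) → Kˣ)
    (hdconst : ∀ σ : K ≃ₐ[k] K, D (d σ : K) = 0)
    (F : Kˣ)
    (hF : ∀ σ : K ≃ₐ[k] K, (f σ : K) ^ s * ((d σ : K))⁻¹ = σ (F : K) / (F : K)) :
    (∀ σ : K ≃ₐ[k] K, σ (u - (1 / (s : K)) * (D (F : K) / (F : K))) =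
        u - (1 / (s : K)) * (D (F : K) / (F : K))) ∧
      u - (1 / (s : K)) * (D (F : K) / (F : K)) ∈ (algebraMap k K).range := by
  have hsK : (s : K) ≠ 0 := Nat.cast_ne_zero.mpr hs.ne'
  -- D 1 = 0
  have hD1 : D 1 = 0 := by
    have h := hDmul 1 1
    rw [mul_one, one_mul, mul_one] at h
    exact left_eq_add.mp h
  -- D of a unit inverse when D c = 0
  have hDinv : ∀ c : Kˣ, D (c : K) = 0 → D ((c : K)⁻¹) = 0 := by
    intro c hc
    have h := hDmul (c : K) ((c : K)⁻¹)
    rw [mul_inv_cancel₀ c.ne_zero, hc, zero_mul, add_zero, hD1] at h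
    have := mul_left_cancel₀ c.ne_zero (h.symm.trans (mul_zero (c : K)).symm)
    exact this
  -- D of powers of units: logD (a^s) = s * Da / a
  have hDpow : ∀ (a : Kˣ) (n : ℕ), D ((a : K) ^ n) = (n : K) * (a : K) ^ n * (D (a : K) / (a : K)) := by
    intro a n
    induction n with
    | zero => simpa using hD1
    | succ m ih =>
      have h := hDmul ((a : K) ^ m) (a : K)
      rw [ih] at h
      rw [pow_succ, h]
      field_simp
      push_cast
      ring
  have key : ∀ σ : K ≃ₐ[k] K, σ (u - (1 / (s : K)) * (D (F : K) / (F : K))) =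
      u - (1 / (s : K)) * (D (F : K) / (F : K)) := by
    intro σ
    have hσF : σ (F : K) = (f σ : K) ^ s * ((d σ : K))⁻¹ * (F : K) := by
      have h := hF σ
      field_simp at h ⊢
      linear_combination -h
    have hσFne : σ (F : K) ≠ 0 := by
      simp [hσF, F.ne_zero, (f σ).ne_zero]
    -- D (σ F)
    have hDσF : D (σ (F : K)) = ((s : K) * (f σ : K) ^ s * (D (f σ : K) / (f σ : K))) *
        ((d σ : K))⁻¹ * (F : K) + (f σ : K) ^ s * ((d σ : K))⁻¹ * D (F : K) := by
      rw [hσF, hDmul, hDmul, hDpow, hDinv (d σ) (hdconst σ)]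
      ring
    have hlog : σ (D (F : K) / (F : K)) = (s : K) * (D (f σ : K) / (f σ : K)) + D (F : K) / (F : K) := by
      rw [map_div₀, hcomm σ, hDσF, hσF]
      field_simp
    have hu := hf σ
    rw [map_sub, map_mul, map_div₀, map_one, map_natCast, hlog]
    have hfne := (f σ).ne_zero
    field_simp at hu ⊢
    linear_combination ((s : K) * (F : K)) * hu
  refine ⟨key, ?_⟩
  have hmem : u - (1 / (s : K)) * (D (F : K) / (F : K)) ∈
      IntermediateField.fixedField (⊤ : Subgroup (K ≃ₐ[k] K)) := by
    intro σ
    exact key σ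
  rw [← IntermediateField.fixingSubgroup_bot (F := k) (E := K), IsGalois.fixedField_fixingSubgroup ⊥,
    IntermediateField.mem_bot] at hmem
  obtain ⟨x, hx⟩ := hmem
  exact ⟨x, hx⟩
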